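/- Let K be a field and let H be an n×n matrix over K[x] with det H ≠ 0 which is in Hermite normal form. Then the following are equivalent: (1) for each index i, the diagonal entry H_{i,i} divides every entry H_{k,l} with k ≥ i and l ≥ i (i.e., H is in triangular Smith normal form); (2) for each i with 1 ≤ i ≤ n, the greatest common divisor of the i×i minors of the submatrix consisting of the leading i columns of H is associated (equal up to a unit of K[x]) to the greatest common divisor of all i×i minors of H. -/

import Mathlib

open Polynomial

/-- A square matrix `H` over `K[x]` is in Hermite normal form if it is upper triangular,
its diagonal entries are monic, and each off-diagonal entry lying in a column whose
diagonal entry is nonzero has degree strictly less than that diagonal entry. -/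
def IsHermiteNormalForm {K : Type*} [Field K] {n : ℕ}
    (H : Matrix (Fin n) (Fin n) (Polynomial K)) : Prop :=
  (∀ i j : Fin n, j < i → H i j = 0) ∧
  (∀ i : Fin n, (H i i).Monic) ∧
  (∀ i j : Fin n, i ≠ j → H j j ≠ 0 → (H i j).degree < (H j j).degree)

/-- A gcd (well defined up to associates) of a list of polynomials over a field. -/
noncomputable def polyListGcd {K : Type*} [Field K] (l : List (Polynomial K)) : Polynomial K :=
  letI : DecidableEq (Polynomial K) := Classical.decEq _
  l.foldr EuclideanDomain.gcd 0

/-- The gcd (up to associates) of all `i × i` minors of an `n × n` matrix `H`, computed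
as the gcd over all row- and column-selection functions of the determinant of the
corresponding `i × i` submatrix.  (Selections that are not injective contribute a zero
determinant, and reorderings only change the sign, so this is associated to the gcd of
the `i × i` minors in the usual sense.) -/
noncomputable def gcdMinors {K : Type*} [Field K] {n : ℕ}
    (H : Matrix (Fin n) (Fin n) (Polynomial K)) (i : ℕ) : Polynomial K :=
  polyListGcd
    (((Finset.univ : Finset ((Fin i → Fin n) × (Fin i → Fin n)))).toList.map
      (fun p => (H.submatrix p.1 p.2).det))

/-- The gcd (up to associates) of all `i × i` minors of `H` lying in the leading `i`
columns of `H`, for `i ≤ n`: the selected columns are exactly the first `i` columns. -/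
noncomputable def gcdLeadingMinors {K : Type*} [Field K] {n : ℕ}
    (H : Matrix (Fin n) (Fin n) (Polynomial K)) (i : ℕ) (hi : i ≤ n) : Polynomial K :=
  polyListGcd
    (((Finset.univ : Finset (Fin i → Fin n))).toList.map
      (fun r => (H.submatrix r (Fin.castLE hi)).det))

section Aux

variable {K : Type*} [Field K] {n : ℕ}

lemma polyListGcd_dvd {l : List (Polynomial K)} {x : Polynomial K} (hx : x ∈ l) :
    polyListGcd l ∣ x := by
  letI : DecidableEq (Polynomial K) := Classical.decEq _
  unfold polyListGcd
  induction l with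
  | nil => simp at hx
  | cons a t ih =>
    rcases List.mem_cons.mp hx with h | h
    · subst h; exact EuclideanDomain.gcd_dvd_left _ _
    · exact dvd_trans (EuclideanDomain.gcd_dvd_right _ _) (ih h)

lemma dvd_polyListGcd {l : List (Polynomial K)} {d : Polynomial K}
    (h : ∀ x ∈ l, d ∣ x) : d ∣ polyListGcd l := by
  letI : DecidableEq (Polynomial K) := Classical.decEq _
  unfold polyListGcd
  induction l with
  | nil => simp
  | cons a t ih =>
    exact EuclideanDomain.dvd_gcd (h a List.mem_cons_self)
      (ih fun x hx => h x (List.mem_cons_of_mem a hx))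

/-- product of the first `i` diagonal entries -/
noncomputable def diagProd (H : Matrix (Fin n) (Fin n) (Polynomial K)) (i : ℕ) (hi : i ≤ n) :
    Polynomial K :=
  ∏ a : Fin i, H (Fin.castLE hi a) (Fin.castLE hi a)

lemma strictMono_val_le {k : ℕ} (g : Fin k → Fin n) (hg : StrictMono g) (a : Fin k) :
    a.1 ≤ (g a).1 := by
  obtain ⟨a, ha⟩ := a
  induction a with
  | zero => exact Nat.zero_le _
  | succ m ih =>
    have h1 : (⟨m, Nat.lt_of_succ_lt ha⟩ : Fin k) < ⟨m + 1, ha⟩ := by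
      simp [Fin.lt_def]
    exact Nat.succ_le_of_lt (lt_of_le_of_lt (ih (Nat.lt_of_succ_lt ha)) (hg h1))

lemma diagProd_dvd_prod_of_injective (H : Matrix (Fin n) (Fin n) (Polynomial K))
    (hchain : ∀ a b : Fin n, a ≤ b → H a a ∣ H b b)
    {i : ℕ} (hi : i ≤ n) (r : Fin i → Fin n) (hr : Function.Injective r) :
    diagProd H i hi ∣ ∏ a : Fin i, H (r a) (r a) := by
  classical
  set s : Finset (Fin n) := Finset.univ.image r with hs
  have hcard : s.card = i := by
    rw [hs, Finset.card_image_of_injective _ hr, Finset.card_univ, Fintype.card_fin]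
  set g : Fin i → Fin n := fun a => s.orderEmbOfFin hcard a with hgdef
  have hgmono : StrictMono g := (s.orderEmbOfFin hcard).strictMono
  have himg : Finset.univ.image g = s := by
    apply Finset.coe_injective
    rw [Finset.coe_image, Finset.coe_univ, Set.image_univ]
    exact Finset.range_orderEmbOfFin s hcard
  have h1 : ∏ a : Fin i, H (r a) (r a) = ∏ x ∈ s, H x x := by
    rw [hs, Finset.prod_image (fun x _ y _ h => hr h)]
  have h2 : ∏ x ∈ s, H x x = ∏ a : Fin i, H (g a) (g a) := by
    rw [← himg, Finset.prod_image (fun x _ y _ h => hgmono.injective h)]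
  rw [h1, h2]
  unfold diagProd
  apply Finset.prod_dvd_prod_of_dvd
  intro a _
  apply hchain
  exact strictMono_val_le g hgmono a

lemma submatrix_blockTriangular (H : Matrix (Fin n) (Fin n) (Polynomial K))
    (htri : ∀ i j : Fin n, j < i → H i j = 0)
    {i : ℕ} (r c : Fin i → Fin n) (hrc : ∀ a b : Fin i, b < a → (c b) < (r a)) :
    (H.submatrix r c).BlockTriangular id := by
  intro a b hab
  exact htri _ _ (hrc a b hab)

lemma det_leading (H : Matrix (Fin n) (Fin n) (Polynomial K))
    (htri : ∀ i j : Fin n, j < i → H i j = 0) {i : ℕ} (hi : i ≤ n) :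
    (H.submatrix (Fin.castLE hi) (Fin.castLE hi)).det = diagProd H i hi := by
  rw [Matrix.det_of_upperTriangular (submatrix_blockTriangular H htri _ _
    (fun a b hab => by rw [Fin.lt_def]; exact hab))]
  rfl

lemma diagProd_dvd_leading (H : Matrix (Fin n) (Fin n) (Polynomial K))
    (htri : ∀ i j : Fin n, j < i → H i j = 0) {i : ℕ} (hi : i ≤ n) (r : Fin i → Fin n) :
    diagProd H i hi ∣ (H.submatrix r (Fin.castLE hi)).det := by
  classical
  by_cases hall : ∀ a : Fin i, (r a).1 < i
  · set r' : Fin i → Fin i := fun a => ⟨(r a).1, hall a⟩ with hr'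
    by_cases hinj : Function.Injective r'
    · have hbij : Function.Bijective r' := Finite.injective_iff_bijective.mp hinj
      set e := Equiv.ofBijective r' hbij with he
      have heq : H.submatrix r (Fin.castLE hi) =
          (H.submatrix (Fin.castLE hi) (Fin.castLE hi)).submatrix e id := by
        ext a b
        have hra : r a = Fin.castLE hi (e a) := Fin.ext rfl
        simp only [Matrix.submatrix_apply, id_eq, hra]
      rw [heq, Matrix.det_permute, det_leading H htri hi]
      exact Dvd.dvd.mul_left dvd_rfl _
    · rw [Function.not_injective_iff] at hinj
      obtain ⟨a, b, hab, hne⟩ := hinj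
      have : (H.submatrix r (Fin.castLE hi)).det = 0 := by
        apply Matrix.det_zero_of_row_eq hne
        funext j
        simp only [Matrix.submatrix_apply]
        have hvals := congrArg Fin.val hab
        rw [show r a = r b from Fin.ext hvals]
      rw [this]; exact dvd_zero _
  · push_neg at hall
    obtain ⟨a, ha⟩ := hall
    have : (H.submatrix r (Fin.castLE hi)).det = 0 := by
      apply Matrix.det_eq_zero_of_row_eq_zero a
      intro j
      apply htri
      rw [Fin.lt_def]
      exact lt_of_lt_of_le j.isLt ha
    rw [this]; exact dvd_zero _

lemma gcdLeadingMinors_assoc (H : Matrix (Fin n) (Fin n) (Polynomial K))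
    (htri : ∀ i j : Fin n, j < i → H i j = 0) {i : ℕ} (hi : i ≤ n) :
    Associated (gcdLeadingMinors H i hi) (diagProd H i hi) := by
  apply associated_of_dvd_dvd
  · apply polyListGcd_dvd
    rw [List.mem_map]
    exact ⟨Fin.castLE hi, by simp, det_leading H htri hi⟩
  · apply dvd_polyListGcd
    intro x hx
    obtain ⟨r, _, rfl⟩ := List.mem_map.mp hx
    exact diagProd_dvd_leading H htri hi r

lemma diagProd_dvd_minor (H : Matrix (Fin n) (Fin n) (Polynomial K))
    (htri : ∀ i j : Fin n, j < i → H i j = 0)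
    (hSmith : ∀ i k l : Fin n, i ≤ k → i ≤ l → H i i ∣ H k l)
    {i : ℕ} (hi : i ≤ n) (r c : Fin i → Fin n) :
    diagProd H i hi ∣ (H.submatrix r c).det := by
  classical
  by_cases hinj : Function.Injective r
  · rw [Matrix.det_apply]
    apply Finset.dvd_sum
    intro σ _
    have key : diagProd H i hi ∣ ∏ a : Fin i, (H.submatrix r c) (σ a) a := by
      have h1 : ∏ a : Fin i, H (r (σ a)) (r (σ a)) = ∏ a : Fin i, H (r a) (r a) :=
        Equiv.prod_comp σ (fun x => H (r x) (r x))
      have h2 : (∏ a : Fin i, H (r (σ a)) (r (σ a))) ∣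
          ∏ a : Fin i, (H.submatrix r c) (σ a) a := by
        apply Finset.prod_dvd_prod_of_dvd
        intro a _
        simp only [Matrix.submatrix_apply]
        rcases le_or_gt (r (σ a)) (c a) with h | h
        · exact hSmith _ _ _ le_rfl h
        · rw [htri _ _ h]; exact dvd_zero _
      refine dvd_trans ?_ h2
      rw [h1]
      exact diagProd_dvd_prod_of_injective H
        (fun a b hab => hSmith a b b hab hab) hi r hinj
    rcases Int.units_eq_one_or (Equiv.Perm.sign σ) with h | h <;> rw [h] <;>
      simpa using key
  · rw [Function.not_injective_iff] at hinj
    obtain ⟨a, b, hab, hne⟩ := hinj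
    have : (H.submatrix r c).det = 0 := by
      apply Matrix.det_zero_of_row_eq hne
      funext j
      simp [Matrix.submatrix_apply, hab]
    rw [this]; exact dvd_zero _

lemma gcdMinors_assoc (H : Matrix (Fin n) (Fin n) (Polynomial K))
    (htri : ∀ i j : Fin n, j < i → H i j = 0)
    (hSmith : ∀ i k l : Fin n, i ≤ k → i ≤ l → H i i ∣ H k l)
    {i : ℕ} (hi : i ≤ n) :
    Associated (gcdMinors H i) (diagProd H i hi) := by
  apply associated_of_dvd_dvd
  · apply polyListGcd_dvd
    rw [List.mem_map]
    exact ⟨(Fin.castLE hi, Fin.castLE hi), by simp, det_leading H htri hi⟩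
  · apply dvd_polyListGcd
    intro x hx
    obtain ⟨p, _, rfl⟩ := List.mem_map.mp hx
    exact diagProd_dvd_minor H htri hSmith hi p.1 p.2

end Aux

theorem triangularSmith_iff_gcd_leading_minors
    {K : Type*} [Field K] {n : ℕ}
    (H : Matrix (Fin n) (Fin n) (Polynomial K))
    (hdet : H.det ≠ 0)
    (hHermite : IsHermiteNormalForm H) :
    (∀ i k l : Fin n, i ≤ k → i ≤ l → H i i ∣ H k l) ↔
      (∀ (i : ℕ) (h1 : 1 ≤ i) (hn : i ≤ n),
        Associated (gcdLeadingMinors H i hn) (gcdMinors H i)) := by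
  obtain ⟨htri, hmonic, hdeg⟩ := hHermite
  constructor
  · intro hSmith i h1 hn
    exact (gcdLeadingMinors_assoc H htri hn).trans (gcdMinors_assoc H htri hSmith hn).symm
  · intro hgcd i k l hik hil
    set m : ℕ := i.1 + 1 with hm
    have hn : m ≤ n := i.2
    have hi' : i.1 ≤ n := le_of_lt i.2
    -- the special (m × m) minor: rows 0,…,i-1,k ; columns 0,…,i-1,l
    set r : Fin m → Fin n := fun a => if h : a.1 < i.1 then ⟨a.1, lt_trans h i.2⟩ else k with hr
    set c : Fin m → Fin n := fun a => if h : a.1 < i.1 then ⟨a.1, lt_trans h i.2⟩ else l with hc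
    have hrlt : ∀ a b : Fin m, b < a → c b < r a := by
      intro a b hab
      have hb : b.1 < i.1 := by
        have := a.2
        omega
      rw [hr, hc]
      simp only [dif_pos hb]
      by_cases ha : a.1 < i.1
      · simp only [dif_pos ha, Fin.lt_def]
        exact hab
      · simp only [dif_neg ha, Fin.lt_def]
        exact lt_of_lt_of_le hb (Fin.le_def.mp hik)
    have hdetspec : (H.submatrix r c).det = diagProd H i.1 hi' * H k l := by
      rw [Matrix.det_of_upperTriangular (submatrix_blockTriangular H htri r c hrlt)]
      have : ∀ a : Fin m, (H.submatrix r c) a a = H (r a) (c a) := fun a => rfl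
      rw [Fin.prod_univ_castSucc]
      congr 1
      · unfold diagProd
        apply Finset.prod_congr rfl
        intro a _
        have ha : (Fin.castSucc a).1 < i.1 := a.2
        simp only [Matrix.submatrix_apply, hr, hc, dif_pos ha]
        rfl
      · have hlast : ¬ ((Fin.last i.1).1 < i.1) := by simp
        simp only [Matrix.submatrix_apply, hr, hc, dif_neg hlast]
    have hDm : diagProd H m hn = diagProd H i.1 hi' * H i i := by
      unfold diagProd
      have e2 : Fin.castLE hn (Fin.last i.1) = i := Fin.ext rfl
      rw [Fin.prod_univ_castSucc, e2]
      congr 1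
    have hDdvd : diagProd H m hn ∣ (H.submatrix r c).det := by
      have h1 : diagProd H m hn ∣ gcdLeadingMinors H m hn :=
        (gcdLeadingMinors_assoc H htri hn).symm.dvd
      have h2 : gcdLeadingMinors H m hn ∣ gcdMinors H m :=
        (hgcd m (Nat.succ_le_succ (Nat.zero_le _)) hn).dvd
      have h3 : gcdMinors H m ∣ (H.submatrix r c).det := by
        apply polyListGcd_dvd
        rw [List.mem_map]
        exact ⟨(r, c), by simp, rfl⟩
      exact dvd_trans (dvd_trans h1 h2) h3
    rw [hDm, hdetspec] at hDdvd
    have hD0 : diagProd H i.1 hi' ≠ 0 := by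
      unfold diagProd
      rw [Finset.prod_ne_zero_iff]
      intro a _
      exact (hmonic _).ne_zero
    exact (mul_dvd_mul_iff_left hD0).mp hDdvd
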